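/- For positive integers a, b, c, d, f (all ≥ 2, ensuring convergence), ζ_{sl(4)}(a,b,c,d,0,f) = ∑_{i=2}^{c} C(c+f−i−1, f−1)(−1)^{c+i} ζ(i) ζ_{sl(3)}(a,b,c+d+f−i) + ∑_{i=2}^{f} C(c+f−i−1, c−1)(−1)^{c} { ∑_{j=1}^{a} C(a+b−j−1, b−1) ζ(i, a+b+c+d+f−i−j, j) + ∑_{j=1}^{b} C(a+b−j−1, a−1) ζ(i, a+b+c+d+f−i−j, j) } − (−1)^{c} C(c+f−2, c−1) ζ_{sl(4)}(a,b,1,c+d+f−2,0,1), where ζ(s₁,s₂,s₃) is the triple Euler sum over n₁ > n₂ > n₃ ≥ 1. -/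

import Mathlib

noncomputable def wittenSl4 (a b c d e f : ℕ) : ℝ :=
  ∑' (n₁ : ℕ) (n₂ : ℕ) (n₃ : ℕ),
    1 / ((n₁ + 1 : ℝ) ^ a * (n₂ + 1 : ℝ) ^ b * (n₃ + 1 : ℝ) ^ c *
      (n₁ + n₂ + 2 : ℝ) ^ d * (n₂ + n₃ + 2 : ℝ) ^ e * (n₁ + n₂ + n₃ + 3 : ℝ) ^ f)

noncomputable def wittenSl3 (a b c : ℕ) : ℝ :=
  ∑' (m : ℕ) (n : ℕ), 1 / ((m + 1 : ℝ) ^ a * (n + 1 : ℝ) ^ b * (m + n + 2 : ℝ) ^ c)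

noncomputable def rzeta (s : ℕ) : ℝ := ∑' (n : ℕ), 1 / ((n + 1 : ℝ) ^ s)

noncomputable def tripleZeta (s₁ s₂ s₃ : ℕ) : ℝ :=
  ∑' (n : ℕ) (j : ℕ) (k : ℕ),
    1 / ((n + j + k + 3 : ℝ) ^ s₁ * (n + j + 2 : ℝ) ^ s₂ * (n + 1 : ℝ) ^ s₃)

open Finset

noncomputable def Xs (s x : ℝ) (a b : ℕ) : ℝ :=
  ∑ k ∈ Finset.range (a+1), ((b+k).choose b : ℝ) / (s^(b+1+k) * x^(a-k) * x)

lemma Xs_zero_left (s x : ℝ) (b : ℕ) : Xs s x 0 b = 1/(s^(b+1) * x) := by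
  simp [Xs]

lemma Xs_succ_zero (s x : ℝ) (a : ℕ) :
    Xs s x (a+1) 0 = (1/x) * Xs s x a 0 + 1/(s^(a+2) * x) := by
  unfold Xs
  rw [Finset.sum_range_succ, Finset.mul_sum]
  congr 1
  · refine Finset.sum_congr rfl fun k hk => ?_
    rw [Finset.mem_range] at hk
    rw [show a + 1 - k = (a - k) + 1 by omega, pow_succ]
    ring
  · rw [show (0:ℕ)+1+(a+1) = a+2 by omega, show a+1-(a+1) = 0 by omega]
    simp

lemma Xs_succ_succ (s x : ℝ) (a b : ℕ) :
    Xs s x (a+1) (b+1) = (1/s) * Xs s x a (b+1) + (1/s) * Xs s x (a+1) b := by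
  have pascal : ∀ k ∈ Finset.range (a+2),
      ((b+1+k).choose (b+1) : ℝ) / (s^(b+1+1+k) * x^(a+1-k) * x)
      = ((b+k).choose b : ℝ) / (s^(b+2+k) * x^(a+1-k) * x)
        + ((b+k).choose (b+1) : ℝ) / (s^(b+2+k) * x^(a+1-k) * x) := by
    intro k _
    rw [show b+1+k = (b+k)+1 by omega, Nat.choose_succ_succ (b+k) b]
    push_cast
    rw [show b+1+1+k = b+2+k by omega]
    ring
  have h1 : ∑ k ∈ Finset.range (a+2), ((b+k).choose b : ℝ) / (s^(b+2+k) * x^(a+1-k) * x)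
      = (1/s) * Xs s x (a+1) b := by
    unfold Xs
    rw [Finset.mul_sum]
    refine Finset.sum_congr rfl fun k hk => ?_
    rw [show b+2+k = (b+1+k)+1 by omega, pow_succ]
    ring
  have h2 : ∑ k ∈ Finset.range (a+2), ((b+k).choose (b+1) : ℝ) / (s^(b+2+k) * x^(a+1-k) * x)
      = (1/s) * Xs s x a (b+1) := by
    rw [Finset.sum_range_succ' _ (a+1)]
    simp only [Nat.choose_succ_self, Nat.cast_zero, zero_div, add_zero]
    unfold Xs
    rw [Finset.mul_sum]
    refine Finset.sum_congr rfl fun k hk => ?_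
    rw [show b+(k+1) = b+1+k by omega, show b+2+(k+1) = (b+1+1+k)+1 by omega,
      show a+1-(k+1) = a-k by omega, pow_succ]
    ring
  have h0 : Xs s x (a+1) (b+1) = ∑ k ∈ Finset.range (a+2),
      ((b+1+k).choose (b+1) : ℝ) / (s^(b+1+1+k) * x^(a+1-k) * x) := rfl
  rw [h0, Finset.sum_congr rfl pascal, Finset.sum_add_distrib, h1, h2]
  ring

lemma pfB_zero (x y : ℝ) (hx : x ≠ 0) (hy : y ≠ 0) (hs : x + y ≠ 0) (a : ℕ) :
    1/(x^(a+1) * y) = Xs (x+y) x a 0 + 1/((x+y)^(a+1) * y) := by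
  induction a with
  | zero =>
    rw [Xs_zero_left]
    field_simp
    ring
  | succ a ih =>
    rw [Xs_succ_zero,
      show Xs (x+y) x a 0 = 1/(x^(a+1)*y) - 1/((x+y)^(a+1)*y) by linarith [ih]]
    field_simp
    ring

lemma pfB (x y : ℝ) (hx : x ≠ 0) (hy : y ≠ 0) (hs : x + y ≠ 0) (a b : ℕ) :
    1/(x^(a+1) * y^(b+1)) = Xs (x+y) x a b + Xs (x+y) y b a := by
  induction a generalizing b with
  | zero =>
    have h := pfB_zero y x hy hx (by rw [add_comm]; exact hs) b
    rw [add_comm y x] at h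
    rw [Xs_zero_left, pow_one, mul_comm x (y^(b+1))]
    linarith [h]
  | succ a iha =>
    induction b with
    | zero =>
      rw [Xs_zero_left, pow_one]
      have h := pfB_zero x y hx hy hs (a+1)
      linarith [h]
    | succ b ihb =>
      rw [Xs_succ_succ, Xs_succ_succ]
      have h1 := iha (b+1)
      have h2 := ihb
      have key : 1/(x^(a+1+1) * y^(b+1+1)) =
          (1/(x+y)) * (1/(x^(a+1)*y^(b+1+1)) + 1/(x^(a+1+1)*y^(b+1))) := by
        field_simp
        ring
      rw [key, h1, h2]
      ring

lemma neg_one_pow_congr' {m n : ℕ} (h : m % 2 = n % 2) : (-1:ℝ)^m = (-1)^n := by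
  conv_lhs => rw [← Nat.div_add_mod m 2]
  conv_rhs => rw [← Nat.div_add_mod n 2]
  rw [pow_add, pow_add, pow_mul, pow_mul, neg_one_sq, one_pow, one_pow, h]

lemma pfA (u v : ℝ) (hu : u ≠ 0) (hv : v ≠ 0) (huv : u + v ≠ 0) (c f : ℕ) :
    1/(u^(c+1) * (u+v)^(f+1)) =
      (∑ k ∈ Finset.range (c+1),
        (-1:ℝ)^k * ((f+k).choose f : ℝ) / (v^(f+1+k) * u^(c-k) * u))
      + (-1)^(c+1) * Xs v (u+v) f c := by
  have h := pfB (-u) (u+v) (neg_ne_zero.mpr hu) huv (by rw [neg_add_cancel_left]; exact hv) c f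
  rw [show -u + (u+v) = v by ring] at h
  have hmul := congrArg (fun t => (-1:ℝ)^(c+1) * t) h
  have hL : (-1:ℝ)^(c+1) * (1/((-u)^(c+1) * (u+v)^(f+1))) = 1/(u^(c+1) * (u+v)^(f+1)) := by
    rw [neg_pow u (c+1)]
    rcases Nat.even_or_odd (c+1) with he | ho
    · rw [he.neg_one_pow]; ring
    · rw [ho.neg_one_pow]; field_simp
  have hX : (-1:ℝ)^(c+1) * Xs v (-u) c f
      = ∑ k ∈ Finset.range (c+1), (-1:ℝ)^k * ((f+k).choose f : ℝ) / (v^(f+1+k) * u^(c-k) * u) := by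
    unfold Xs
    rw [Finset.mul_sum]
    refine Finset.sum_congr rfl fun k hk => ?_
    rw [Finset.mem_range] at hk
    rw [neg_pow u (c-k)]
    rcases Nat.even_or_odd c with hc2 | hc2 <;> rcases Nat.even_or_odd k with hk2 | hk2
    · have e1 : Odd (c+1) := Even.add_one hc2
      have e2 : Even (c-k) := by
        rcases hc2 with ⟨p, hp⟩; rcases hk2 with ⟨q, hq⟩; exact ⟨p - q, by omega⟩
      rw [e1.neg_one_pow, e2.neg_one_pow, hk2.neg_one_pow]
      field_simp
    · have e1 : Odd (c+1) := Even.add_one hc2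
      have e2 : Odd (c-k) := by
        rcases hc2 with ⟨p, hp⟩; rcases hk2 with ⟨q, hq⟩; exact ⟨p - q - 1, by omega⟩
      rw [e1.neg_one_pow, e2.neg_one_pow, hk2.neg_one_pow]
      field_simp
    · have e1 : Even (c+1) := by
        rcases hc2 with ⟨p, hp⟩; exact ⟨p + 1, by omega⟩
      have e2 : Odd (c-k) := by
        rcases hc2 with ⟨p, hp⟩; rcases hk2 with ⟨q, hq⟩; exact ⟨p - q, by omega⟩
      rw [e1.neg_one_pow, e2.neg_one_pow, hk2.neg_one_pow]
      field_simp
      try ring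
    · have e1 : Even (c+1) := by
        rcases hc2 with ⟨p, hp⟩; exact ⟨p + 1, by omega⟩
      have e2 : Even (c-k) := by
        rcases hc2 with ⟨p, hp⟩; rcases hk2 with ⟨q, hq⟩; exact ⟨p - q, by omega⟩
      rw [e1.neg_one_pow, e2.neg_one_pow, hk2.neg_one_pow]
      field_simp
      try ring
  rw [← hL, hmul, mul_add, hX]

noncomputable def gen (α β γ δ ε : ℕ) (p : ℕ × ℕ × ℕ) : ℝ :=
  1 / ((p.1 + 1 : ℝ)^α * (p.2.1 + 1 : ℝ)^β * (p.2.2 + 1 : ℝ)^γ *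
    (p.1 + p.2.1 + 2 : ℝ)^δ * (p.1 + p.2.1 + p.2.2 + 3 : ℝ)^ε)

lemma gen_nonneg (α β γ δ ε : ℕ) (p : ℕ × ℕ × ℕ) : 0 ≤ gen α β γ δ ε p := by
  unfold gen; positivity

lemma gen_le_D (α β γ δ ε δ1 δ2 ε1 ε2 ε3 : ℕ) (hδ : δ1+δ2 ≤ δ) (hε : ε1+ε2+ε3 ≤ ε)
    (h1 : 2 ≤ α+δ1+ε1) (h2 : 2 ≤ β+δ2+ε2) (h3 : 2 ≤ γ+ε3) (p : ℕ × ℕ × ℕ) :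
    gen α β γ δ ε p ≤ 1/((p.1+1:ℝ)^2) * (1/((p.2.1+1:ℝ)^2) * (1/((p.2.2+1:ℝ)^2))) := by
  obtain ⟨n1, n2, n3⟩ := p
  simp only [gen]
  have o1 : (1:ℝ) ≤ (n1:ℝ)+1 := by have := Nat.cast_nonneg (α := ℝ) n1; linarith
  have o2 : (1:ℝ) ≤ (n2:ℝ)+1 := by have := Nat.cast_nonneg (α := ℝ) n2; linarith
  have o3 : (1:ℝ) ≤ (n3:ℝ)+1 := by have := Nat.cast_nonneg (α := ℝ) n3; linarith
  set t1 : ℝ := (n1:ℝ)+1 with ht1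
  set t2 : ℝ := (n2:ℝ)+1 with ht2
  set t3 : ℝ := (n3:ℝ)+1 with ht3
  have e12 : ((n1:ℝ) + (n2:ℝ) + 2) = t1+t2 := by rw [ht1, ht2]; ring
  have e123 : ((n1:ℝ) + (n2:ℝ) + (n3:ℝ) + 3) = t1+t2+t3 := by rw [ht1, ht2, ht3]; ring
  rw [e12, e123]
  have key : t1^2*t2^2*t3^2 ≤ t1^α * t2^β * t3^γ * (t1+t2)^δ * (t1+t2+t3)^ε := by
    calc t1^2*t2^2*t3^2 ≤ t1^(α+δ1+ε1) * t2^(β+δ2+ε2) * t3^(γ+ε3) := by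
          gcongr ?_ * ?_ * ?_ <;> apply pow_le_pow_right₀ <;> first | assumption | omega
      _ = (t1^α*t2^β*t3^γ) * (t1^δ1*t2^δ2) * (t1^ε1*t2^ε2*t3^ε3) := by
          simp only [pow_add]; ring
      _ ≤ (t1^α*t2^β*t3^γ) * ((t1+t2)^δ1*(t1+t2)^δ2) *
            ((t1+t2+t3)^ε1*(t1+t2+t3)^ε2*(t1+t2+t3)^ε3) := by
          gcongr <;> linarith
      _ = (t1^α*t2^β*t3^γ) * (t1+t2)^(δ1+δ2) * (t1+t2+t3)^(ε1+ε2+ε3) := by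
          rw [pow_add, pow_add]; ring
      _ ≤ (t1^α*t2^β*t3^γ) * (t1+t2)^δ * (t1+t2+t3)^ε := by
          gcongr <;> first | linarith | omega
      _ = t1^α * t2^β * t3^γ * (t1+t2)^δ * (t1+t2+t3)^ε := by ring
  calc 1/(t1^α * t2^β * t3^γ * (t1+t2)^δ * (t1+t2+t3)^ε)
      ≤ 1/(t1^2*t2^2*t3^2) := by
        apply one_div_le_one_div_of_le (by positivity) key
    _ = 1/t1^2 * (1/t2^2 * (1/t3^2)) := by
        rw [one_div, mul_inv, mul_inv, mul_assoc]
        simp [one_div]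

lemma summable_sq : Summable (fun n : ℕ => 1/((n+1:ℝ)^2)) := by
  have h := Real.summable_one_div_nat_pow.mpr (le_refl 2)
  have := (summable_nat_add_iff 1).mpr h
  refine this.congr fun n => ?_
  push_cast
  ring

lemma h2' : Summable (fun q : ℕ×ℕ => 1/((q.1+1:ℝ)^2) * (1/((q.2+1:ℝ)^2))) := by
  apply Summable.mul_of_nonneg summable_sq summable_sq <;> intro n <;> positivity

lemma summable_D : Summable (fun p : ℕ×ℕ×ℕ =>
    1/((p.1+1:ℝ)^2) * (1/((p.2.1+1:ℝ)^2) * (1/((p.2.2+1:ℝ)^2)))) := by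
  apply Summable.mul_of_nonneg summable_sq h2'
  · intro n; positivity
  · intro q; positivity

lemma tsum_triple_eq (F : ℕ×ℕ×ℕ → ℝ) (hF : Summable F) :
    ∑' p, F p = ∑' n₁, ∑' n₂, ∑' n₃, F (n₁, n₂, n₃) := by
  rw [Summable.tsum_prod hF]
  exact tsum_congr fun n₁ => Summable.tsum_prod (hF.prod_factor n₁)

lemma wittenSl4_eq (a b c d f : ℕ) (h : Summable (gen a b c d f)) :
    wittenSl4 a b c d 0 f = ∑' p, gen a b c d f p := by
  rw [tsum_triple_eq _ h, wittenSl4]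
  refine tsum_congr fun n1 => tsum_congr fun n2 => tsum_congr fun n3 => ?_
  simp [gen]

lemma tsum_gen_eps_zero (α β γ δ : ℕ) (h : Summable (gen α β γ δ 0)) :
    ∑' p, gen α β γ δ 0 p = rzeta γ * wittenSl3 α β δ := by
  rw [tsum_triple_eq _ h]
  have inner : ∀ n1 n2 : ℕ, (∑' n3, gen α β γ δ 0 (n1,n2,n3))
      = (1/((n1+1:ℝ)^α * (n2+1:ℝ)^β * (n1+n2+2:ℝ)^δ)) * rzeta γ := by
    intro n1 n2
    rw [rzeta, ← tsum_mul_left]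
    refine tsum_congr fun n3 => ?_
    simp only [gen, pow_zero, mul_one]
    rw [div_mul_div_comm, one_mul]
    ring_nf
  calc ∑' n1, ∑' n2, ∑' n3, gen α β γ δ 0 (n1,n2,n3)
      = ∑' (n1:ℕ), ∑' (n2:ℕ), (1/(((n1:ℝ)+1)^α * ((n2:ℝ)+1)^β * ((n1:ℝ)+(n2:ℝ)+2)^δ)) * rzeta γ := by
        exact tsum_congr fun n1 => tsum_congr fun n2 => inner n1 n2
    _ = rzeta γ * wittenSl3 α β δ := by
        rw [wittenSl3]
        simp_rw [tsum_mul_right]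
        rw [mul_comm]

lemma tsum_gen_tz1 (α δ ε : ℕ) (h : Summable (gen α 0 0 δ ε)) :
    ∑' p, gen α 0 0 δ ε p = tripleZeta ε δ α := by
  rw [tsum_triple_eq _ h, tripleZeta]
  refine tsum_congr fun n => tsum_congr fun j => tsum_congr fun k => ?_
  simp only [gen, pow_zero, mul_one, one_mul]
  ring_nf

def swapEquiv : (ℕ×ℕ×ℕ) ≃ (ℕ×ℕ×ℕ) :=
  ⟨fun p => (p.2.1, p.1, p.2.2), fun p => (p.2.1, p.1, p.2.2), fun p => rfl, fun p => rfl⟩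

lemma tsum_gen_tz2 (β δ ε : ℕ) (h : Summable (gen 0 β 0 δ ε)) (h' : Summable (gen β 0 0 δ ε)) :
    ∑' p, gen 0 β 0 δ ε p = tripleZeta ε δ β := by
  have swap : ∑' p, gen 0 β 0 δ ε p = ∑' p, gen β 0 0 δ ε p := by
    rw [← Equiv.tsum_eq swapEquiv (gen β 0 0 δ ε)]
    refine tsum_congr fun p => ?_
    simp only [gen, swapEquiv, Equiv.coe_fn_mk, pow_zero, mul_one, one_mul]
    ring_nf
  rw [swap]
  exact tsum_gen_tz1 β δ ε h'

lemma sum_Icc_two (m : ℕ) (G : ℕ → ℝ) :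
    ∑ i ∈ Finset.Icc 2 m, G i = ∑ k ∈ Finset.range (m-1), G (m-k) := by
  refine Finset.sum_bij' (fun i _ => m - i) (fun k _ => m - k) ?_ ?_ ?_ ?_ ?_
  · intro i hi; simp only [Finset.mem_Icc] at hi; simp only [Finset.mem_range]; omega
  · intro k hk; simp only [Finset.mem_range] at hk; simp only [Finset.mem_Icc]; omega
  · intro i hi; simp only [Finset.mem_Icc] at hi; omega
  · intro k hk; simp only [Finset.mem_range] at hk; omega
  · intro i hi; simp only [Finset.mem_Icc] at hi; congr 1; omega

lemma sum_Icc_one (m : ℕ) (G : ℕ → ℝ) :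
    ∑ j ∈ Finset.Icc 1 m, G j = ∑ l ∈ Finset.range m, G (m-l) := by
  refine Finset.sum_bij' (fun i _ => m - i) (fun k _ => m - k) ?_ ?_ ?_ ?_ ?_
  · intro i hi; simp only [Finset.mem_Icc] at hi; simp only [Finset.mem_range]; omega
  · intro k hk; simp only [Finset.mem_range] at hk; simp only [Finset.mem_Icc]; omega
  · intro i hi; simp only [Finset.mem_Icc] at hi; omega
  · intro k hk; simp only [Finset.mem_range] at hk; omega
  · intro i hi; simp only [Finset.mem_Icc] at hi; congr 1; omega

lemma decompB (a b δ ε : ℕ) (ha : 1 ≤ a) (hb : 1 ≤ b) (p : ℕ×ℕ×ℕ) :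
    gen a b 0 δ ε p
    = (∑ l ∈ Finset.range a, ((b-1+l).choose (b-1) : ℝ) * gen (a-l) 0 0 (δ+b+l) ε p)
    + (∑ l ∈ Finset.range b, ((a-1+l).choose (a-1) : ℝ) * gen 0 (b-l) 0 (δ+a+l) ε p) := by
  obtain ⟨n1,n2,n3⟩ := p
  simp only [gen, pow_zero, mul_one, one_mul]
  have o1 : (0:ℝ) < (n1:ℝ)+1 := by positivity
  have o2 : (0:ℝ) < (n2:ℝ)+1 := by positivity
  have o3 : (0:ℝ) < (n3:ℝ)+1 := by positivity
  set t1 : ℝ := (n1:ℝ)+1 with ht1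
  set t2 : ℝ := (n2:ℝ)+1 with ht2
  set t3 : ℝ := (n3:ℝ)+1 with ht3
  have e12 : ((n1:ℝ) + (n2:ℝ) + 2) = t1+t2 := by rw [ht1, ht2]; ring
  have ne1 : t1 ≠ 0 := o1.ne'
  have ne2 : t2 ≠ 0 := o2.ne'
  have ne12 : t1+t2 ≠ 0 := by positivity
  have ne123 : t1+t2+t3 ≠ 0 := by positivity
  have e123 : ((n1:ℝ) + (n2:ℝ) + (n3:ℝ) + 3) = (t1+t2)+t3 := by rw [ht1, ht2, ht3]; ring
  rw [e12, e123]
  have hpf := pfB t1 t2 o1.ne' o2.ne' (by positivity) (a-1) (b-1)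
  rw [show a-1+1 = a by omega, show b-1+1 = b by omega] at hpf
  have expand : 1/(t1^a*t2^b*(t1+t2)^δ*((t1+t2)+t3)^ε)
      = (Xs (t1+t2) t1 (a-1) (b-1) + Xs (t1+t2) t2 (b-1) (a-1))
        * (1/((t1+t2)^δ*((t1+t2)+t3)^ε)) := by
    rw [← hpf]; ring
  rw [expand, add_mul]
  congr 1
  · unfold Xs
    rw [show a-1+1 = a by omega, Finset.sum_mul]
    refine Finset.sum_congr rfl fun l hl => ?_
    rw [Finset.mem_range] at hl
    rw [show b-1+1+l = b+l by omega, show a-l = (a-1-l)+1 by omega, pow_succ,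
      show δ+b+l = δ+(b+l) by omega, pow_add]
    field_simp
    rw [pow_add]
    ring
  · unfold Xs
    rw [show b-1+1 = b by omega, Finset.sum_mul]
    refine Finset.sum_congr rfl fun l hl => ?_
    rw [Finset.mem_range] at hl
    rw [show a-1+1+l = a+l by omega, show b-l = (b-1-l)+1 by omega, pow_succ,
      show δ+a+l = δ+(a+l) by omega, pow_add]
    field_simp
    rw [pow_add]
    ring

lemma decompA (a b c d f : ℕ) (hc : 2 ≤ c) (hf : 2 ≤ f) (p : ℕ×ℕ×ℕ) :
    gen a b c d f p
    = (∑ k ∈ Finset.range (c-1), ((f-1+k).choose (f-1) : ℝ) * (-1)^k * gen a b (c-k) (d+f+k) 0 p)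
    + (∑ k ∈ Finset.range (f-1), (-1:ℝ)^c * ((c-1+k).choose (c-1) : ℝ) * gen a b 0 (c+d+k) (f-k) p)
    + (-1:ℝ)^(c+1) * ((c+f-2).choose (c-1) : ℝ) * gen a b 1 (c+d+f-2) 1 p := by
  obtain ⟨n1,n2,n3⟩ := p
  simp only [gen, pow_zero, mul_one, one_mul, pow_one]
  have o1 : (0:ℝ) < (n1:ℝ)+1 := by positivity
  have o2 : (0:ℝ) < (n2:ℝ)+1 := by positivity
  have o3 : (0:ℝ) < (n3:ℝ)+1 := by positivity
  set t1 : ℝ := (n1:ℝ)+1 with ht1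
  set t2 : ℝ := (n2:ℝ)+1 with ht2
  set t3 : ℝ := (n3:ℝ)+1 with ht3
  have e12 : ((n1:ℝ) + (n2:ℝ) + 2) = t1+t2 := by rw [ht1, ht2]; ring
  have e123 : ((n1:ℝ) + (n2:ℝ) + (n3:ℝ) + 3) = (t1+t2)+t3 := by rw [ht1, ht2, ht3]; ring
  rw [e12, e123]
  set v : ℝ := t1+t2 with hv
  have ov : (0:ℝ) < v := by rw [hv]; linarith
  have ne1 : t1 ≠ 0 := o1.ne'
  have ne2 : t2 ≠ 0 := o2.ne'
  have ne3 : t3 ≠ 0 := o3.ne'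
  have nev : v ≠ 0 := ov.ne'
  have ovz : (0:ℝ) < v + t3 := by linarith
  have nevz : v + t3 ≠ 0 := ovz.ne'
  have h := pfA t3 v ne3 nev (ne_of_gt (by linarith : (0:ℝ) < t3 + v)) (c-1) (f-1)
  unfold Xs at h
  rw [Finset.sum_range_succ] at h
  rw [Finset.sum_range_succ] at h
  rw [show c-1+1 = c by omega, show f-1+1 = f by omega] at h
  simp only [Nat.sub_self, pow_zero, one_mul, mul_one] at h
  rw [show f+(c-1) = c+f-1 by omega, show c+(f-1) = c+f-1 by omega] at h
  have hch1 : ((f-1+(c-1)).choose (f-1)) = ((c+f-2).choose (c-1)) := by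
    rw [show f-1+(c-1) = c+f-2 by omega, show f-1 = c+f-2-(c-1) by omega]
    exact Nat.choose_symm (by omega)
  rw [hch1, show c-1+(f-1) = c+f-2 by omega] at h
  rw [show t3+v = v+t3 by ring] at h
  rw [show ((-1:ℝ))^(c-1) = (-1)^(c+1) from neg_one_pow_congr' (by omega)] at h
  have eq1 : (∑ k ∈ Finset.range (c-1),
        (-1:ℝ)^k * ((f-1+k).choose (f-1):ℝ) / (v^(f+k) * t3^(c-1-k) * t3))
        * (1/(t1^a*t2^b*v^d))
      = ∑ k ∈ Finset.range (c-1), ((f-1+k).choose (f-1) : ℝ) * (-1)^k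
          * (1/(t1^a * t2^b * t3^(c-k) * v^(d+f+k))) := by
    rw [Finset.sum_mul]
    refine Finset.sum_congr rfl fun k hk => ?_
    rw [Finset.mem_range] at hk
    rw [show c-k = (c-1-k)+1 by omega, pow_succ, show d+f+k = d+(f+k) by omega, pow_add]
    rcases Nat.even_or_odd k with he | ho
    · rw [he.neg_one_pow]
      field_simp
      try left
      try ring
    · rw [ho.neg_one_pow]
      field_simp
      try left
      try ring
  have eq2 : ((-1:ℝ)^c * ∑ k ∈ Finset.range (f-1),
        ((c-1+k).choose (c-1):ℝ) / (v^(c+k) * (v+t3)^(f-1-k) * (v+t3)))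
        * (1/(t1^a*t2^b*v^d))
      = ∑ k ∈ Finset.range (f-1), (-1:ℝ)^c * ((c-1+k).choose (c-1) : ℝ)
          * (1/(t1^a*t2^b*v^(c+d+k)*(v+t3)^(f-k))) := by
    rw [Finset.mul_sum, Finset.sum_mul]
    refine Finset.sum_congr rfl fun k hk => ?_
    rw [Finset.mem_range] at hk
    rw [show f-k = (f-1-k)+1 by omega, pow_succ, show c+d+k = d+(c+k) by omega, pow_add]
    rcases Nat.even_or_odd c with he | ho
    · rw [he.neg_one_pow]
      field_simp
      try left
      try ring
    · rw [ho.neg_one_pow]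
      field_simp
      try left
      try ring
  have eq3 : ((-1:ℝ)^(c+1) * ((c+f-2).choose (c-1):ℝ) / (v^(c+f-1) * t3))
        * (1/(t1^a*t2^b*v^d))
      + ((-1:ℝ)^c * (((c+f-2).choose (c-1):ℝ) / (v^(c+f-1) * (v+t3))))
        * (1/(t1^a*t2^b*v^d))
      = (-1:ℝ)^(c+1) * ((c+f-2).choose (c-1) : ℝ)
          * (1/(t1^a*t2^b*t3*v^(c+d+f-2)*(v+t3))) := by
    rw [show c+d+f-2 = d+(c+f-2) by omega, show c+f-1 = (c+f-2)+1 by omega]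
    rw [pow_succ v (c+f-2), pow_succ (-1:ℝ) c]
    field_simp
    ring
  have key : 1/(t1^a*t2^b*t3^c*v^d*(v+t3)^f) = (1/(t3^c*(v+t3)^f)) * (1/(t1^a*t2^b*v^d)) := by
    rw [div_mul_div_comm, one_mul]
    congr 1
    ring
  rw [key, h]
  linear_combination eq1 + eq2 + eq3

lemma gen_summable (α β γ δ ε δ1 δ2 ε1 ε2 ε3 : ℕ) (hδ : δ1+δ2 ≤ δ) (hε : ε1+ε2+ε3 ≤ ε)
    (h1 : 2 ≤ α+δ1+ε1) (h2 : 2 ≤ β+δ2+ε2) (h3 : 2 ≤ γ+ε3) : Summable (gen α β γ δ ε) :=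
  Summable.of_nonneg_of_le (gen_nonneg α β γ δ ε)
    (gen_le_D α β γ δ ε δ1 δ2 ε1 ε2 ε3 hδ hε h1 h2 h3) summable_D

lemma evalB (a b c d f k : ℕ) (ha : 2 ≤ a) (hb : 2 ≤ b) (hc : 2 ≤ c) (hd : 2 ≤ d)
    (hf : 2 ≤ f) (hk : k < f - 1) :
    ∑' p, gen a b 0 (c+d+k) (f-k) p
    = (∑ l ∈ Finset.range a, ((b-1+l).choose (b-1) : ℝ) * tripleZeta (f-k) (c+d+k+b+l) (a-l))
    + (∑ l ∈ Finset.range b, ((a-1+l).choose (a-1) : ℝ) * tripleZeta (f-k) (c+d+k+a+l) (b-l)) := by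
  have hU : ∀ l, l < a → Summable (gen (a-l) 0 0 (c+d+k+b+l) (f-k)) := fun l hl =>
    gen_summable _ _ _ _ _ 1 2 0 0 2 (by omega) (by omega) (by omega) (by omega) (by omega)
  have hV : ∀ l, l < b → Summable (gen 0 (b-l) 0 (c+d+k+a+l) (f-k)) := fun l hl =>
    gen_summable _ _ _ _ _ 2 1 0 0 2 (by omega) (by omega) (by omega) (by omega) (by omega)
  have hV' : ∀ l, l < b → Summable (gen (b-l) 0 0 (c+d+k+a+l) (f-k)) := fun l hl =>
    gen_summable _ _ _ _ _ 1 2 0 0 2 (by omega) (by omega) (by omega) (by omega) (by omega)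
  rw [tsum_congr (decompB a b (c+d+k) (f-k) (by omega) (by omega))]
  rw [Summable.tsum_add]
  · congr 1
    · rw [Summable.tsum_finsetSum (fun l hl => ((hU l (Finset.mem_range.mp hl)).mul_left _))]
      refine Finset.sum_congr rfl fun l hl => ?_
      rw [Finset.mem_range] at hl
      rw [tsum_mul_left, tsum_gen_tz1 _ _ _ (hU l hl)]
    · rw [Summable.tsum_finsetSum (fun l hl => ((hV l (Finset.mem_range.mp hl)).mul_left _))]
      refine Finset.sum_congr rfl fun l hl => ?_
      rw [Finset.mem_range] at hl
      rw [tsum_mul_left, tsum_gen_tz2 _ _ _ (hV l hl) (hV' l hl)]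
  · exact summable_sum fun l hl => ((hU l (Finset.mem_range.mp hl)).mul_left _)
  · exact summable_sum fun l hl => ((hV l (Finset.mem_range.mp hl)).mul_left _)

theorem eq22 (a b c d f : ℕ)
    (ha : 2 ≤ a) (hb : 2 ≤ b) (hc : 2 ≤ c) (hd : 2 ≤ d) (hf : 2 ≤ f) :
    wittenSl4 a b c d 0 f =
      (∑ i ∈ Finset.Icc 2 c, (Nat.choose (c + f - i - 1) (f - 1) : ℝ) * (-1) ^ (c + i) *
        rzeta i * wittenSl3 a b (c + d + f - i)) +
      (∑ i ∈ Finset.Icc 2 f, (Nat.choose (c + f - i - 1) (c - 1) : ℝ) * (-1) ^ c *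
        ((∑ j ∈ Finset.Icc 1 a, (Nat.choose (a + b - j - 1) (b - 1) : ℝ) *
            tripleZeta i (a + b + c + d + f - i - j) j) +
         (∑ j ∈ Finset.Icc 1 b, (Nat.choose (a + b - j - 1) (a - 1) : ℝ) *
            tripleZeta i (a + b + c + d + f - i - j) j))) -
      (-1 : ℝ) ^ c * (Nat.choose (c + f - 2) (c - 1) : ℝ) *
        wittenSl4 a b 1 (c + d + f - 2) 0 1 := by
  have hF : Summable (gen a b c d f) :=
    gen_summable _ _ _ _ _ 0 0 0 0 0 (by omega) (by omega) (by omega) (by omega) (by omega)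
  have hA : ∀ k, k < c - 1 → Summable (gen a b (c-k) (d+f+k) 0) := fun k hk =>
    gen_summable _ _ _ _ _ 0 0 0 0 0 (by omega) (by omega) (by omega) (by omega) (by omega)
  have hB : ∀ k, k < f - 1 → Summable (gen a b 0 (c+d+k) (f-k)) := fun k hk =>
    gen_summable _ _ _ _ _ 0 0 0 0 2 (by omega) (by omega) (by omega) (by omega) (by omega)
  have hE : Summable (gen a b 1 (c+d+f-2) 1) :=
    gen_summable _ _ _ _ _ 0 0 0 0 1 (by omega) (by omega) (by omega) (by omega) (by omega)
  have hS1 : Summable (fun p => ∑ k ∈ Finset.range (c-1),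
      ((f-1+k).choose (f-1) : ℝ) * (-1)^k * gen a b (c-k) (d+f+k) 0 p) :=
    summable_sum fun k hk => ((hA k (Finset.mem_range.mp hk)).mul_left _)
  have hS2 : Summable (fun p => ∑ k ∈ Finset.range (f-1),
      (-1:ℝ)^c * ((c-1+k).choose (c-1) : ℝ) * gen a b 0 (c+d+k) (f-k) p) :=
    summable_sum fun k hk => ((hB k (Finset.mem_range.mp hk)).mul_left _)
  have hS3 : Summable (fun p => (-1:ℝ)^(c+1) * ((c+f-2).choose (c-1) : ℝ) *
      gen a b 1 (c+d+f-2) 1 p) := hE.mul_left _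
  calc wittenSl4 a b c d 0 f = ∑' p, gen a b c d f p := wittenSl4_eq a b c d f hF
    _ = ∑' p, ((∑ k ∈ Finset.range (c-1),
            ((f-1+k).choose (f-1) : ℝ) * (-1)^k * gen a b (c-k) (d+f+k) 0 p)
        + (∑ k ∈ Finset.range (f-1),
            (-1:ℝ)^c * ((c-1+k).choose (c-1) : ℝ) * gen a b 0 (c+d+k) (f-k) p)
        + (-1:ℝ)^(c+1) * ((c+f-2).choose (c-1) : ℝ) * gen a b 1 (c+d+f-2) 1 p) :=
      tsum_congr (decompA a b c d f hc hf)
    _ = (∑' p, ∑ k ∈ Finset.range (c-1),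
            ((f-1+k).choose (f-1) : ℝ) * (-1)^k * gen a b (c-k) (d+f+k) 0 p)
        + (∑' p, ∑ k ∈ Finset.range (f-1),
            (-1:ℝ)^c * ((c-1+k).choose (c-1) : ℝ) * gen a b 0 (c+d+k) (f-k) p)
        + ∑' p, (-1:ℝ)^(c+1) * ((c+f-2).choose (c-1) : ℝ) * gen a b 1 (c+d+f-2) 1 p := by
      rw [Summable.tsum_add (hS1.add hS2) hS3, Summable.tsum_add hS1 hS2]
    _ = (∑ k ∈ Finset.range (c-1), ((f-1+k).choose (f-1) : ℝ) * (-1)^k *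
            (rzeta (c-k) * wittenSl3 a b (d+f+k)))
        + (∑ k ∈ Finset.range (f-1), (-1:ℝ)^c * ((c-1+k).choose (c-1) : ℝ) *
            ((∑ l ∈ Finset.range a, ((b-1+l).choose (b-1) : ℝ) *
                tripleZeta (f-k) (c+d+k+b+l) (a-l))
            + (∑ l ∈ Finset.range b, ((a-1+l).choose (a-1) : ℝ) *
                tripleZeta (f-k) (c+d+k+a+l) (b-l))))
        + (-1:ℝ)^(c+1) * ((c+f-2).choose (c-1) : ℝ) * wittenSl4 a b 1 (c+d+f-2) 0 1 := by
      congr 1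
      · congr 1
        · rw [Summable.tsum_finsetSum (fun k hk => ((hA k (Finset.mem_range.mp hk)).mul_left _))]
          refine Finset.sum_congr rfl fun k hk => ?_
          rw [Finset.mem_range] at hk
          rw [tsum_mul_left, tsum_gen_eps_zero a b (c-k) (d+f+k) (hA k hk)]
        · rw [Summable.tsum_finsetSum (fun k hk => ((hB k (Finset.mem_range.mp hk)).mul_left _))]
          refine Finset.sum_congr rfl fun k hk => ?_
          rw [Finset.mem_range] at hk
          rw [tsum_mul_left, evalB a b c d f k ha hb hc hd hf hk]
      · rw [tsum_mul_left, ← wittenSl4_eq a b 1 (c+d+f-2) 1 hE]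
    _ = _ := by
      rw [sum_Icc_two c (fun i => ((c + f - i - 1).choose (f - 1) : ℝ) * (-1) ^ (c + i) *
            rzeta i * wittenSl3 a b (c + d + f - i))]
      rw [sum_Icc_two f (fun i => ((c + f - i - 1).choose (c - 1) : ℝ) * (-1) ^ c *
            ((∑ j ∈ Finset.Icc 1 a, ((a + b - j - 1).choose (b - 1) : ℝ) *
                tripleZeta i (a + b + c + d + f - i - j) j) +
             (∑ j ∈ Finset.Icc 1 b, ((a + b - j - 1).choose (a - 1) : ℝ) *
                tripleZeta i (a + b + c + d + f - i - j) j)))]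
      have e1 : ∀ k ∈ Finset.range (c-1),
          ((f-1+k).choose (f-1) : ℝ) * (-1)^k * (rzeta (c-k) * wittenSl3 a b (d+f+k))
          = ((c + f - (c-k) - 1).choose (f - 1) : ℝ) * (-1) ^ (c + (c-k)) *
            rzeta (c-k) * wittenSl3 a b (c + d + f - (c-k)) := by
        intro k hk
        rw [Finset.mem_range] at hk
        rw [show c + f - (c-k) - 1 = f-1+k by omega, show c + d + f - (c-k) = d+f+k by omega,
          show ((-1:ℝ)) ^ (c + (c-k)) = (-1)^k from neg_one_pow_congr' (by omega)]
        ring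
      have e2 : ∀ k ∈ Finset.range (f-1),
          (-1:ℝ)^c * ((c-1+k).choose (c-1) : ℝ) *
            ((∑ l ∈ Finset.range a, ((b-1+l).choose (b-1) : ℝ) *
                tripleZeta (f-k) (c+d+k+b+l) (a-l))
            + (∑ l ∈ Finset.range b, ((a-1+l).choose (a-1) : ℝ) *
                tripleZeta (f-k) (c+d+k+a+l) (b-l)))
          = ((c + f - (f-k) - 1).choose (c - 1) : ℝ) * (-1) ^ c *
            ((∑ j ∈ Finset.Icc 1 a, ((a + b - j - 1).choose (b - 1) : ℝ) *
                tripleZeta (f-k) (a + b + c + d + f - (f-k) - j) j) +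
             (∑ j ∈ Finset.Icc 1 b, ((a + b - j - 1).choose (a - 1) : ℝ) *
                tripleZeta (f-k) (a + b + c + d + f - (f-k) - j) j)) := by
        intro k hk
        rw [Finset.mem_range] at hk
        rw [show c + f - (f-k) - 1 = c-1+k by omega]
        rw [sum_Icc_one a (fun j => ((a + b - j - 1).choose (b - 1) : ℝ) *
              tripleZeta (f-k) (a + b + c + d + f - (f-k) - j) j)]
        rw [sum_Icc_one b (fun j => ((a + b - j - 1).choose (a - 1) : ℝ) *
              tripleZeta (f-k) (a + b + c + d + f - (f-k) - j) j)]
        have ea : ∀ l ∈ Finset.range a,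
            ((b-1+l).choose (b-1) : ℝ) * tripleZeta (f-k) (c+d+k+b+l) (a-l)
            = ((a + b - (a-l) - 1).choose (b - 1) : ℝ) *
              tripleZeta (f-k) (a + b + c + d + f - (f-k) - (a-l)) (a-l) := by
          intro l hl
          rw [Finset.mem_range] at hl
          rw [show a + b - (a-l) - 1 = b-1+l by omega,
            show a + b + c + d + f - (f-k) - (a-l) = c+d+k+b+l by omega]
        have eb : ∀ l ∈ Finset.range b,
            ((a-1+l).choose (a-1) : ℝ) * tripleZeta (f-k) (c+d+k+a+l) (b-l)
            = ((a + b - (b-l) - 1).choose (a - 1) : ℝ) *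
              tripleZeta (f-k) (a + b + c + d + f - (f-k) - (b-l)) (b-l) := by
          intro l hl
          rw [Finset.mem_range] at hl
          rw [show a + b - (b-l) - 1 = a-1+l by omega,
            show a + b + c + d + f - (f-k) - (b-l) = c+d+k+a+l by omega]
        rw [Finset.sum_congr rfl ea, Finset.sum_congr rfl eb]
        ring
      rw [Finset.sum_congr rfl e1, Finset.sum_congr rfl e2]
      rw [show ((-1:ℝ))^(c+1) = -(-1)^c by rw [pow_succ]; ring]
      ring
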